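/- Let n ≥ 2 be an integer. The function on the unit disc t ↦ (1/(4t)) · ((1−t)^{-(n+1)} − (1+t)^{-(n+1)}), extended continuously at t = 0 by its limit (n+1)/2, has a zero in the open unit disc if and only if n + 1 > 4, i.e. n ≥ 4. -/

import Mathlib

open Complex Real

theorem folded_ball_kernel_zero_iff (n : ℕ) (hn : 2 ≤ n) :
    (∃ t : ℂ, ‖t‖ < 1 ∧
      (if t = 0 then ((n : ℂ) + 1) / 2
       else (1 / (4 * t)) * ((1 - t) ^ (-(n + 1 : ℤ)) - (1 + t) ^ (-(n + 1 : ℤ)))) = 0)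
    ↔ 4 ≤ n := by
  have hexp : ∀ (x : ℂ), x ^ (-(n + 1 : ℤ)) = (x ^ (n + 1))⁻¹ := by
    intro x
    rw [show (-(n + 1 : ℤ)) = -((n + 1 : ℕ) : ℤ) by push_cast; ring, zpow_neg, zpow_natCast]
  constructor
  · rintro ⟨t, ht, heq⟩
    by_contra h4
    push_neg at h4
    by_cases h0 : t = 0
    · rw [if_pos h0] at heq
      have hne : ((n : ℂ) + 1) ≠ 0 := Nat.cast_add_one_ne_zero n
      rw [div_eq_zero_iff] at heq
      rcases heq with h | h
      · exact hne h
      · norm_num at h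
    · rw [if_neg h0, hexp, hexp] at heq
      have hf : (1 / (4 * t) : ℂ) ≠ 0 := by simp [h0]
      have hAB : ((1 - t) ^ (n + 1))⁻¹ = ((1 + t) ^ (n + 1))⁻¹ := by
        have h := (mul_eq_zero.1 heq).resolve_left hf
        exact sub_eq_zero.mp h
      have hpow : (1 - t) ^ (n + 1) = (1 + t) ^ (n + 1) := inv_inj.mp hAB
      interval_cases n
      · have ht2 : t ^ 2 = -3 := by
          have h6 : t * (t ^ 2 + 3) = 0 := by linear_combination (-(1 : ℂ) / 2) * hpow
          have h' := (mul_eq_zero.1 h6).resolve_left h0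
          linear_combination h'
        have hnorm : ‖t‖ ^ 2 = 3 := by
          have := congrArg norm ht2
          simpa [norm_pow] using this
        nlinarith [norm_nonneg t]
      · have ht2 : t ^ 2 = -1 := by
          have h8 : t * (t ^ 2 + 1) = 0 := by linear_combination (-(1 : ℂ) / 8) * hpow
          have h' := (mul_eq_zero.1 h8).resolve_left h0
          linear_combination h'
        have hnorm : ‖t‖ ^ 2 = 1 := by
          have := congrArg norm ht2
          simpa [norm_pow] using this
        nlinarith [norm_nonneg t]
  · intro h4
    set θ : ℝ := 2 * π / (n + 1) with hθdef
    have hn5 : (5 : ℝ) ≤ (n : ℝ) + 1 := by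
      have : (4 : ℝ) ≤ (n : ℝ) := by exact_mod_cast h4
      linarith
    have hpi := Real.pi_pos
    have hθpos : 0 < θ := by positivity
    have hθlt : θ < π / 2 := by
      rw [hθdef, div_lt_iff₀ (by linarith)]
      nlinarith
    set w : ℂ := Complex.exp (θ * Complex.I) with hwdef
    have hre : w.re = Real.cos θ := by
      rw [hwdef, Complex.exp_ofReal_mul_I_re]
    have hcos : 0 < Real.cos θ := Real.cos_pos_of_mem_Ioo ⟨by linarith, hθlt⟩
    have hcoslt : Real.cos θ < 1 := by
      have := Real.cos_lt_cos_of_nonneg_of_le_pi (le_refl 0) (by linarith) hθpos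
      simpa using this
    have hwpow : w ^ (n + 1) = 1 := by
      rw [hwdef, ← Complex.exp_nat_mul]
      have harg : ((n : ℂ) + 1) * (↑θ * Complex.I) = 2 * ↑π * Complex.I := by
        have hne : ((n : ℝ) + 1) ≠ 0 := by positivity
        have : ((n : ℝ) + 1) * θ = 2 * π := by
          rw [hθdef]; field_simp
        calc ((n : ℂ) + 1) * (↑θ * Complex.I) = ↑(((n : ℝ) + 1) * θ) * Complex.I := by
              push_cast; ring
          _ = 2 * ↑π * Complex.I := by rw [this]; push_cast; ring
      push_cast
      rw [harg, Complex.exp_two_pi_mul_I]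
    have hw1 : w + 1 ≠ 0 := by
      intro h
      have : w.re + 1 = 0 := by
        have := congrArg Complex.re h
        simpa using this
      rw [hre] at this
      linarith
    have hwne1 : w - 1 ≠ 0 := by
      intro h
      have : w.re - 1 = 0 := by
        have := congrArg Complex.re h
        simpa using this
      rw [hre] at this
      linarith
    refine ⟨(w - 1) / (w + 1), ?_, ?_⟩
    · rw [norm_div, div_lt_one (norm_pos_iff.mpr hw1)]
      have e1 : ‖w - 1‖ ^ 2 = (w.re - 1) ^ 2 + w.im ^ 2 := by
        rw [Complex.sq_norm, Complex.normSq_apply]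
        simp [Complex.sub_re, Complex.sub_im]
        ring
      have e2 : ‖w + 1‖ ^ 2 = (w.re + 1) ^ 2 + w.im ^ 2 := by
        rw [Complex.sq_norm, Complex.normSq_apply]
        simp [Complex.add_re, Complex.add_im]
        ring
      have hlt : ‖w - 1‖ ^ 2 < ‖w + 1‖ ^ 2 := by
        rw [e1, e2]
        nlinarith [hre, hcos]
      nlinarith [norm_nonneg (w - 1), norm_nonneg (w + 1)]
    · have ht0 : (w - 1) / (w + 1) ≠ 0 := div_ne_zero hwne1 hw1
      rw [if_neg ht0, hexp, hexp]
      have h1t : (1 : ℂ) - (w - 1) / (w + 1) = 2 / (w + 1) := by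
        field_simp
        ring
      have h2t : (1 : ℂ) + (w - 1) / (w + 1) = 2 * w / (w + 1) := by
        field_simp
        ring
      have hkey : ((1 : ℂ) + (w - 1) / (w + 1)) = w * ((1 : ℂ) - (w - 1) / (w + 1)) := by
        rw [h1t, h2t]; ring
      have hpoweq : ((1 : ℂ) - (w - 1) / (w + 1)) ^ (n + 1)
          = ((1 : ℂ) + (w - 1) / (w + 1)) ^ (n + 1) := by
        rw [hkey, mul_pow, hwpow, one_mul]
      rw [hpoweq]
      ring
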